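/- Let γ ≥ 1 and let w₁, w₂, …, w_{2γ+1} be positive integers; set l = w₁ + w₃ + ⋯ + w_{2γ+1} and m = w₂ + w₄ + ⋯ + w_{2γ}. Then the alternating matrix product P^{w₁} Q^{w₂} P^{w₃} ⋯ Q^{w_{2γ}} P^{w_{2γ+1}} equals a^{l−(γ+1)} · b^γ · c^γ · d^{m−γ} · P. -/

import Mathlib

open scoped BigOperators

/-- The matrix `P = [[a, b], [0, 0]]`. -/
noncomputable def Pmat (a b : ℝ) : Matrix (Fin 2) (Fin 2) ℝ := !![a, b; 0, 0]
/-- The matrix `Q = [[0, 0], [c, d]]`. -/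
noncomputable def Qmat (c d : ℝ) : Matrix (Fin 2) (Fin 2) ℝ := !![0, 0; c, d]
/-- The matrix `R = [[c, d], [0, 0]]`. -/
noncomputable def Rmat (c d : ℝ) : Matrix (Fin 2) (Fin 2) ℝ := !![c, d; 0, 0]
/-- The matrix `S = [[0, 0], [a, b]]`. -/
noncomputable def Smat (a b : ℝ) : Matrix (Fin 2) (Fin 2) ℝ := !![0, 0; a, b]


/-- For `γ ≥ 1` and positive integers `w₁, …, w_{2γ+1}` with
`l = w₁ + w₃ + ⋯ + w_{2γ+1}` and `m = w₂ + w₄ + ⋯ + w_{2γ}`, the alternating product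
`P^{w₁} Q^{w₂} P^{w₃} ⋯ Q^{w_{2γ}} P^{w_{2γ+1}}` equals
`a^{l−(γ+1)} b^γ c^γ d^{m−γ} P`.  (Positions are 1-based in the informal statement, so the
odd 1-based positions are the even `Fin` indices.) -/
lemma Pmat_sq' (a b : ℝ) : Pmat a b * Pmat a b = a • Pmat a b := by
  ext i j; fin_cases i <;> fin_cases j <;>
    simp [Pmat, Matrix.mul_apply, Fin.sum_univ_two]

lemma Qmat_sq' (c d : ℝ) : Qmat c d * Qmat c d = d • Qmat c d := by
  ext i j; fin_cases i <;> fin_cases j <;>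
    simp [Qmat, Matrix.mul_apply, Fin.sum_univ_two]

lemma Pmat_pow' (a b : ℝ) (k : ℕ) : (Pmat a b) ^ (k + 1) = a ^ k • Pmat a b := by
  induction k with
  | zero => simp
  | succ k ih => rw [pow_succ, ih, Matrix.smul_mul, Pmat_sq', smul_smul, pow_succ]

lemma Qmat_pow' (c d : ℝ) (k : ℕ) : (Qmat c d) ^ (k + 1) = d ^ k • Qmat c d := by
  induction k with
  | zero => simp
  | succ k ih => rw [pow_succ, ih, Matrix.smul_mul, Qmat_sq', smul_smul, pow_succ]

def AltStmt (a b c d : ℝ) (n : ℕ) : Prop := ∀ (w : Fin (2 * n + 1) → ℕ), (∀ i, 0 < w i) →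
    n + 1 ≤ (∑ i ∈ Finset.univ.filter (fun i : Fin (2 * n + 1) => (i : ℕ) % 2 = 0), w i) ∧
    n ≤ (∑ i ∈ Finset.univ.filter (fun i : Fin (2 * n + 1) => (i : ℕ) % 2 = 1), w i) ∧
    (List.ofFn (fun i : Fin (2 * n + 1) =>
        (if (i : ℕ) % 2 = 0 then Pmat a b else Qmat c d) ^ (w i))).prod =
      (a ^ ((∑ i ∈ Finset.univ.filter (fun i : Fin (2 * n + 1) => (i : ℕ) % 2 = 0), w i) - (n + 1))
        * b ^ n * c ^ n *
       d ^ ((∑ i ∈ Finset.univ.filter (fun i : Fin (2 * n + 1) => (i : ℕ) % 2 = 1), w i) - n))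
        • Pmat a b

lemma alt_base (a b c d : ℝ) : AltStmt a b c d 0 := by
  intro w hw
  have h0 : 0 < w 0 := hw 0
  have hfe : (Finset.univ.filter (fun i : Fin (2 * 0 + 1) => (i : ℕ) % 2 = 0)) = {0} := by decide
  have hfo : (Finset.univ.filter (fun i : Fin (2 * 0 + 1) => (i : ℕ) % 2 = 1)) = ∅ := by decide
  rw [hfe, hfo]
  simp only [Finset.sum_singleton, Finset.sum_empty]
  refine ⟨by omega, by omega, ?_⟩
  obtain ⟨k, hk⟩ := Nat.exists_eq_succ_of_ne_zero h0.ne'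
  rw [hk]
  rw [List.ofFn_succ, List.ofFn_zero, List.prod_cons, List.prod_nil, mul_one]
  simp only [Fin.val_zero, Nat.zero_mod, if_true, hk, Pmat_pow']
  norm_num

lemma alt_step (a b c d : ℝ) (n : ℕ) (ih : AltStmt a b c d n)
    (w : Fin (2 * n + 1 + 1 + 1) → ℕ) (hw : ∀ i, 0 < w i) :
    n + 1 + 1 ≤ (∑ i ∈ Finset.univ.filter (fun i : Fin (2 * n + 1 + 1 + 1) => (i : ℕ) % 2 = 0), w i) ∧
    n + 1 ≤ (∑ i ∈ Finset.univ.filter (fun i : Fin (2 * n + 1 + 1 + 1) => (i : ℕ) % 2 = 1), w i) ∧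
    (List.ofFn (fun i : Fin (2 * n + 1 + 1 + 1) =>
        (if (i : ℕ) % 2 = 0 then Pmat a b else Qmat c d) ^ (w i))).prod =
      (a ^ ((∑ i ∈ Finset.univ.filter (fun i : Fin (2 * n + 1 + 1 + 1) => (i : ℕ) % 2 = 0), w i) - (n + 1 + 1))
        * b ^ (n + 1) * c ^ (n + 1) *
       d ^ ((∑ i ∈ Finset.univ.filter (fun i : Fin (2 * n + 1 + 1 + 1) => (i : ℕ) % 2 = 1), w i) - (n + 1)))
        • Pmat a b := by
  set w' : Fin (2 * n + 1) → ℕ := fun i => w (i.castSucc.castSucc) with hw'def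
  have hw' : ∀ i, 0 < w' i := fun i => hw _
  obtain ⟨hL', hM', hprod'⟩ := ih w' hw'
  have hsum : ∀ (g : Fin (2 * n + 1 + 1 + 1) → ℕ), (∑ i, g i) =
      (∑ i : Fin (2 * n + 1), g (i.castSucc.castSucc)) +
        g ((Fin.last (2 * n + 1)).castSucc) + g (Fin.last (2 * n + 1 + 1)) := by
    intro g
    rw [Fin.sum_univ_castSucc, Fin.sum_univ_castSucc]
  have hodd : ((Fin.last (2 * n + 1)).castSucc : Fin (2*n+1+1+1)) = ⟨2*n+1, by omega⟩ := by
    ext; simp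
  have heven : (Fin.last (2 * n + 1 + 1) : Fin (2*n+1+1+1)) = ⟨2*n+2, by omega⟩ := rfl
  have hSe : (∑ i ∈ Finset.univ.filter (fun i : Fin (2 * n + 1 + 1 + 1) => (i : ℕ) % 2 = 0), w i)
      = (∑ i ∈ Finset.univ.filter (fun i : Fin (2 * n + 1) => (i : ℕ) % 2 = 0), w' i)
        + w (Fin.last (2 * n + 1 + 1)) := by
    rw [Finset.sum_filter, Finset.sum_filter, hsum (fun i => if (i:ℕ) % 2 = 0 then w i else 0)]
    simp only [Fin.coe_castSucc, hodd, heven, Fin.val_last]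
    have h1 : (2*n+1) % 2 = 1 := by omega
    have h2 : (2*n+2) % 2 = 0 := by omega
    simp [h1, h2, hw'def]
  have hSo : (∑ i ∈ Finset.univ.filter (fun i : Fin (2 * n + 1 + 1 + 1) => (i : ℕ) % 2 = 1), w i)
      = (∑ i ∈ Finset.univ.filter (fun i : Fin (2 * n + 1) => (i : ℕ) % 2 = 1), w' i)
        + w ((Fin.last (2 * n + 1)).castSucc) := by
    rw [Finset.sum_filter, Finset.sum_filter, hsum (fun i => if (i:ℕ) % 2 = 1 then w i else 0)]
    simp only [Fin.coe_castSucc, hodd, heven, Fin.val_last]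
    have h1 : (2*n+1) % 2 = 1 := by omega
    have h2 : (2*n+2) % 2 = 0 := by omega
    simp [h1, h2, hw'def]
  set u := w (Fin.last (2 * n + 1 + 1)) with hu
  set v := w ((Fin.last (2 * n + 1)).castSucc) with hv
  have hupos : 0 < u := hw _
  have hvpos : 0 < v := hw _
  refine ⟨by omega, by omega, ?_⟩
  rw [List.ofFn_succ', List.ofFn_succ', List.concat_eq_append, List.concat_eq_append,
      List.prod_append, List.prod_append, List.prod_cons, List.prod_nil, List.prod_cons,
      List.prod_nil]
  have hfix : Fin.last (2*n+2) = Fin.last (2*n+1+1) := rfl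
  have hcv : ((Fin.last (2 * n + 1)).castSucc : ℕ) = 2*n+1 := by simp
  have hcl : ((Fin.last (2 * n + 1 + 1)) : ℕ) = 2*n+2 := rfl
  rw [hfix, if_neg (by rw [hcv]; omega), if_pos (by rw [hcl]; omega), ← hu, ← hv]
  obtain ⟨u', hu1⟩ : ∃ u', u = u' + 1 := ⟨u - 1, by omega⟩
  obtain ⟨v', hv1⟩ : ∃ v', v = v' + 1 := ⟨v - 1, by omega⟩
  have hlist : (List.ofFn fun i : Fin (2*n+1) =>
      (if (i.castSucc.castSucc : ℕ) % 2 = 0 then Pmat a b else Qmat c d) ^ w i.castSucc.castSucc)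
      = (List.ofFn fun i : Fin (2*n+1) => (if (i : ℕ) % 2 = 0 then Pmat a b else Qmat c d) ^ w' i) := by
    simp [hw'def]
  have key : ∀ x y z : ℝ, (x • Pmat a b) * (y • Qmat c d) * (z • Pmat a b)
      = (x*y*z*(b*c)) • Pmat a b := by
    intro x y z
    ext i j
    fin_cases i <;> fin_cases j <;>
      simp [Pmat, Qmat, Matrix.mul_apply, Fin.sum_univ_two, Matrix.smul_apply] <;> ring
  rw [hlist, hprod', hu1, hv1, Pmat_pow', Qmat_pow', mul_one, mul_one, key]
  congr 1
  rw [hSe, hSo, hu1, hv1]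
  have e1 : (∑ i ∈ Finset.filter (fun i : Fin (2*n+1) => (i:ℕ) % 2 = 0) Finset.univ, w' i) + (u' + 1) - (n + 1 + 1)
      = ((∑ i ∈ Finset.filter (fun i : Fin (2*n+1) => (i:ℕ) % 2 = 0) Finset.univ, w' i) - (n + 1)) + u' := by omega
  have e2 : (∑ i ∈ Finset.filter (fun i : Fin (2*n+1) => (i:ℕ) % 2 = 1) Finset.univ, w' i) + (v' + 1) - (n + 1)
      = ((∑ i ∈ Finset.filter (fun i : Fin (2*n+1) => (i:ℕ) % 2 = 1) Finset.univ, w' i) - n) + v' := by omega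
  rw [e1, e2, pow_add, pow_add, pow_succ b, pow_succ c]
  ring

lemma alt_all (a b c d : ℝ) : ∀ n, AltStmt a b c d n := by
  intro n
  induction n with
  | zero => exact alt_base a b c d
  | succ n ih => exact fun w hw => alt_step a b c d n ih w hw


theorem alternating_product (a d b c : ℝ) (ha : 0 < a) (ha1 : a < 1) (hd : 0 < d)
    (hd1 : d < 1) (hb : b = 1 - d) (hc : c = 1 - a) (hΔ : a * d - b * c ≠ 0)
    (γ : ℕ) (hγ : 1 ≤ γ) (w : Fin (2 * γ + 1) → ℕ) (hw : ∀ i, 0 < w i)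
    (l m : ℕ)
    (hl : l = ∑ i ∈ Finset.univ.filter (fun i : Fin (2 * γ + 1) => (i : ℕ) % 2 = 0), w i)
    (hm : m = ∑ i ∈ Finset.univ.filter (fun i : Fin (2 * γ + 1) => (i : ℕ) % 2 = 1), w i) :
    (List.ofFn (fun i : Fin (2 * γ + 1) =>
        (if (i : ℕ) % 2 = 0 then Pmat a b else Qmat c d) ^ (w i))).prod =
      (a ^ (l - (γ + 1)) * b ^ γ * c ^ γ * d ^ (m - γ)) • Pmat a b := by
  obtain ⟨hL, hM, hprod⟩ := alt_all a b c d γ w hw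
  rw [hl, hm]
  exact hprod
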